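/- Let A be an n × n matrix over a field K (K = ℝ or ℂ) with rank A = n − k for some 1 ≤ k ≤ n − 1. Then adj_k(A) = u vᵀ for nonzero vectors u, v ∈ K^C(n,k), where u spans (i.e., is a basis of) the one-dimensional space ⋀^k ker(A) and v spans the one-dimensional space ⋀^k ker(Aᵀ), both identified with subspaces of K^C(n,k) via Plücker coordinates. -/

import Mathlib

open Matrix

variable {K : Type*}

/-- The `k`-th compound matrix of an `m × n` matrix `A`: it is indexed by the
`k`-element subsets of the row/column index sets (which correspond to `Fin (choose _ k)`
via the lexicographic order), and its `(S, T)` entry is the `k × k` minor of `A`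
on rows `S` and columns `T`. -/
def compound [CommRing K] {m n : ℕ} (k : ℕ) (A : Matrix (Fin m) (Fin n) K) :
    Matrix {s : Finset (Fin m) // s.card = k} {t : Finset (Fin n) // t.card = k} K :=
  fun S T => (A.submatrix (S.1.orderEmbOfFin S.2) (T.1.orderEmbOfFin T.2)).det

/-- The `k`-th adjugate of an `n × n` matrix `A` (generalizing the classical adjugate,
which is the case `k = 1`): its `(S, T)` entry is `(-1) ^ (Σ S + Σ T)` times the
`(n-k) × (n-k)` minor of `A` obtained by deleting the rows indexed by `T` and the
columns indexed by `S`.  (The sums `Σ S`, `Σ T` are taken with 1-based indexing in the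
classical formula; with 0-based indexing the parity is unchanged.) -/
def adjCompound [CommRing K] {n : ℕ} (k : ℕ) (A : Matrix (Fin n) (Fin n) K) :
    Matrix {s : Finset (Fin n) // s.card = k} {t : Finset (Fin n) // t.card = k} K :=
  fun S T =>
    (-1 : K) ^ ((∑ i ∈ S.1, (i : ℕ)) + (∑ j ∈ T.1, (j : ℕ))) *
      (A.submatrix
        ((T.1ᶜ).orderEmbOfFin (show (T.1ᶜ).card = n - k by
          simp [Finset.card_compl, T.2]))
        ((S.1ᶜ).orderEmbOfFin (show (S.1ᶜ).card = n - k by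
          simp [Finset.card_compl, S.2]))).det

/-- The Plücker coordinates of `x₁ ∧ ⋯ ∧ x_k ∈ ℂ^(choose n k)`: the coordinate at the
`k`-element subset `S` is the `k × k` minor of the `n × k` matrix `[x₁ ⋯ x_k]` on rows `S`. -/
def wedgeVec [CommRing K] {n k : ℕ} (x : Fin k → Fin n → K) :
    {s : Finset (Fin n) // s.card = k} → K :=
  fun S => (Matrix.of fun (i j : Fin k) => x j (S.1.orderEmbOfFin S.2 i)).det

/-- The characteristic polynomial `P(t) = det (A - t I)`. -/
noncomputable def detPoly [CommRing K] {n : ℕ} (A : Matrix (Fin n) (Fin n) K) : Polynomial K :=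
  ((Matrix.of fun i j => Polynomial.C (A i j)) - (Polynomial.X : Polynomial K) • 1).det


section
open Finset


section Shuffle
variable {n : ℕ}

lemma orderEmbOfFin_congr {α : Type*} [LinearOrder α] {S T : Finset α} (hST : S = T) {k : ℕ}
    (hS : S.card = k) (hT : T.card = k) (i : Fin k) :
    S.orderEmbOfFin hS i = T.orderEmbOfFin hT i := by subst hST; rfl

lemma orderEmbOfFin_mk {α : Type*} [LinearOrder α] (S : Finset α) {k m : ℕ}
    (hk : S.card = k) (hm : S.card = m) (i : ℕ) (h1 : i < k) (h2 : i < m) :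
    S.orderEmbOfFin hk ⟨i, h1⟩ = S.orderEmbOfFin hm ⟨i, h2⟩ := by
  subst hk; subst hm; rfl

lemma card_compl_fin (S : Finset (Fin n)) : Sᶜ.card = n - S.card := by
  simp [Finset.card_compl]

lemma card_le_fin (S : Finset (Fin n)) : S.card ≤ n := by
  simpa using Finset.card_le_univ S

/-- The permutation of `Fin n` sending the first `S.card` indices increasingly onto `S`
and the remaining indices increasingly onto `Sᶜ`. -/
noncomputable def shuffleFun (S : Finset (Fin n)) : Fin n → Fin n := fun p =>
  if h : (p : ℕ) < S.card then S.orderEmbOfFin rfl ⟨p, h⟩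
  else Sᶜ.orderEmbOfFin (card_compl_fin S) ⟨(p : ℕ) - S.card, by
    have h1 := p.isLt
    have h2 := card_le_fin S
    omega⟩

lemma shuffleFun_injective (S : Finset (Fin n)) : Function.Injective (shuffleFun S) := by
  intro p q hpq
  unfold shuffleFun at hpq
  split_ifs at hpq with h1 h2 h2
  · have h3 := (S.orderEmbOfFin rfl).injective hpq
    have h4 : (p : ℕ) = (q : ℕ) := by simpa using h3
    exact Fin.ext h4
  · exfalso
    have m1 : S.orderEmbOfFin rfl ⟨p, h1⟩ ∈ S := S.orderEmbOfFin_mem rfl _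
    rw [hpq] at m1
    have m2 := Sᶜ.orderEmbOfFin_mem (card_compl_fin S)
      ⟨(q : ℕ) - S.card, by have := q.isLt; have := card_le_fin S; omega⟩
    rw [Finset.mem_compl] at m2; exact m2 m1
  · exfalso
    have m1 : S.orderEmbOfFin rfl ⟨q, h2⟩ ∈ S := S.orderEmbOfFin_mem rfl _
    rw [← hpq] at m1
    have m2 := Sᶜ.orderEmbOfFin_mem (card_compl_fin S)
      ⟨(p : ℕ) - S.card, by have := p.isLt; have := card_le_fin S; omega⟩
    rw [Finset.mem_compl] at m2; exact m2 m1
  · have h3 := (Sᶜ.orderEmbOfFin (card_compl_fin S)).injective hpq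
    have h4 : (p : ℕ) - S.card = (q : ℕ) - S.card := by simpa using h3
    exact Fin.ext (by omega)

noncomputable def shuffle (S : Finset (Fin n)) : Equiv.Perm (Fin n) :=
  Equiv.ofBijective (shuffleFun S) (Finite.injective_iff_bijective.mp (shuffleFun_injective S))

lemma shuffle_apply (S : Finset (Fin n)) (p : Fin n) : shuffle S p = shuffleFun S p := rfl

lemma shuffle_apply_lt (S : Finset (Fin n)) {k : ℕ} (hS : S.card = k) (p : Fin n)
    (h : (p : ℕ) < k) :
    shuffle S p = S.orderEmbOfFin hS ⟨p, h⟩ := by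
  subst hS
  rw [shuffle_apply, shuffleFun, dif_pos h]

lemma shuffle_apply_ge (S : Finset (Fin n)) {m : ℕ} (hc : Sᶜ.card = m) (p : Fin n)
    (h : S.card ≤ (p : ℕ)) (h2 : (p : ℕ) - S.card < m) :
    shuffle S p = Sᶜ.orderEmbOfFin hc ⟨(p : ℕ) - S.card, h2⟩ := by
  rw [shuffle_apply, shuffleFun, dif_neg (by omega)]
  exact orderEmbOfFin_mk _ _ _ _ _ _

end Shuffle

section Swap
variable {n : ℕ}

lemma swap_emb_eq (S : Finset (Fin n)) (s t : Fin n) (hs : s ∈ S) (ht : t ∉ S)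
    (hts : (t : ℕ) + 1 = (s : ℕ)) {k : ℕ} (hS : S.card = k)
    (hS' : (insert t (S.erase s)).card = k) (i : Fin k) :
    (insert t (S.erase s)).orderEmbOfFin hS' i = Equiv.swap t s (S.orderEmbOfFin hS i) := by
  have hmem : ∀ j : Fin k, Equiv.swap t s (S.orderEmbOfFin hS j) ∈ insert t (S.erase s) := by
    intro j
    have ha : S.orderEmbOfFin hS j ∈ S := S.orderEmbOfFin_mem hS j
    by_cases h : S.orderEmbOfFin hS j = s
    · rw [h, Equiv.swap_apply_right]
      exact Finset.mem_insert_self _ _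
    · have hne : S.orderEmbOfFin hS j ≠ t := fun hc => ht (hc ▸ ha)
      rw [Equiv.swap_apply_of_ne_of_ne hne h]
      exact Finset.mem_insert_of_mem (Finset.mem_erase.mpr ⟨h, ha⟩)
  have hmono : StrictMono (fun j : Fin k => Equiv.swap t s (S.orderEmbOfFin hS j)) := by
    intro i j hij
    show Equiv.swap t s (S.orderEmbOfFin hS i) < Equiv.swap t s (S.orderEmbOfFin hS j)
    set a := S.orderEmbOfFin hS i with hadef
    set b := S.orderEmbOfFin hS j with hbdef
    have hab : a < b := (S.orderEmbOfFin hS).strictMono hij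
    have haS : a ∈ S := S.orderEmbOfFin_mem hS i
    have hbS : b ∈ S := S.orderEmbOfFin_mem hS j
    have hat : a ≠ t := fun hc => ht (hc ▸ haS)
    have hbt : b ≠ t := fun hc => ht (hc ▸ hbS)
    have hab' : (a : ℕ) < (b : ℕ) := hab
    by_cases has : a = s
    · have hbs : b ≠ s := fun hc => by rw [has, hc] at hab; exact lt_irrefl _ hab
      rw [has, Equiv.swap_apply_right, Equiv.swap_apply_of_ne_of_ne hbt hbs]
      have h1 : (s : ℕ) < (b : ℕ) := by rw [← has]; exact hab'
      exact Fin.lt_def.mpr (by omega)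
    · by_cases hbs : b = s
      · rw [hbs, Equiv.swap_apply_right, Equiv.swap_apply_of_ne_of_ne hat has]
        have h1 : (a : ℕ) < (s : ℕ) := by rw [← hbs]; exact hab'
        have h2 : (a : ℕ) ≠ (t : ℕ) := fun hc => hat (Fin.ext hc)
        exact Fin.lt_def.mpr (by omega)
      · rw [Equiv.swap_apply_of_ne_of_ne hat has, Equiv.swap_apply_of_ne_of_ne hbt hbs]
        exact hab
  exact (congrFun (Finset.orderEmbOfFin_unique hS' hmem hmono) i).symm

lemma swap_emb_eq_compl (S : Finset (Fin n)) (s t : Fin n) (hs : s ∈ S) (ht : t ∉ S)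
    (hts : (t : ℕ) + 1 = (s : ℕ)) {m : ℕ} (hSc : Sᶜ.card = m)
    (hS'c : (insert t (S.erase s))ᶜ.card = m) (i : Fin m) :
    (insert t (S.erase s))ᶜ.orderEmbOfFin hS'c i = Equiv.swap t s (Sᶜ.orderEmbOfFin hSc i) := by
  have hst : t ≠ s := fun hc => by rw [hc] at hts; omega
  have hcompl : (insert t (S.erase s))ᶜ = insert s (Sᶜ.erase t) := by
    ext x
    simp only [Finset.mem_compl, Finset.mem_insert, Finset.mem_erase, not_or, not_and]
    constructor
    · rintro ⟨hxt, h2⟩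
      by_cases hxs : x = s
      · exact Or.inl hxs
      · exact Or.inr ⟨hxt, h2 hxs⟩
    · rintro (rfl | ⟨h1, h2⟩)
      · exact ⟨fun hc => hst hc.symm, fun hxs _ => hxs rfl⟩
      · exact ⟨h1, fun _ => h2⟩
  have hmem : ∀ j : Fin m, Equiv.swap t s (Sᶜ.orderEmbOfFin hSc j) ∈ (insert t (S.erase s))ᶜ := by
    intro j
    rw [hcompl]
    have ha : Sᶜ.orderEmbOfFin hSc j ∈ Sᶜ := Sᶜ.orderEmbOfFin_mem hSc j
    rw [Finset.mem_compl] at ha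
    by_cases h : Sᶜ.orderEmbOfFin hSc j = t
    · rw [h, Equiv.swap_apply_left]
      exact Finset.mem_insert_self _ _
    · have hne : Sᶜ.orderEmbOfFin hSc j ≠ s := fun hc => ha (hc ▸ hs)
      rw [Equiv.swap_apply_of_ne_of_ne h hne]
      exact Finset.mem_insert_of_mem (Finset.mem_erase.mpr ⟨h, Finset.mem_compl.mpr ha⟩)
  have hmono : StrictMono (fun j : Fin m => Equiv.swap t s (Sᶜ.orderEmbOfFin hSc j)) := by
    intro i j hij
    show Equiv.swap t s (Sᶜ.orderEmbOfFin hSc i) < Equiv.swap t s (Sᶜ.orderEmbOfFin hSc j)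
    set a := Sᶜ.orderEmbOfFin hSc i
    set b := Sᶜ.orderEmbOfFin hSc j
    have hab : a < b := (Sᶜ.orderEmbOfFin hSc).strictMono hij
    have haS : a ∉ S := Finset.mem_compl.mp (Sᶜ.orderEmbOfFin_mem hSc i)
    have hbS : b ∉ S := Finset.mem_compl.mp (Sᶜ.orderEmbOfFin_mem hSc j)
    have has : a ≠ s := fun hc => haS (hc ▸ hs)
    have hbs : b ≠ s := fun hc => hbS (hc ▸ hs)
    have hab' : (a : ℕ) < (b : ℕ) := hab
    by_cases hat : a = t
    · have hbt : b ≠ t := fun hc => by rw [hat, hc] at hab; exact lt_irrefl _ hab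
      rw [hat, Equiv.swap_apply_left, Equiv.swap_apply_of_ne_of_ne hbt hbs]
      have h1 : (t : ℕ) < (b : ℕ) := by rw [← hat]; exact hab'
      have h2 : (b : ℕ) ≠ (s : ℕ) := fun hc => hbs (Fin.ext hc)
      exact Fin.lt_def.mpr (by omega)
    · by_cases hbt : b = t
      · rw [hbt, Equiv.swap_apply_left, Equiv.swap_apply_of_ne_of_ne hat has]
        have h1 : (a : ℕ) < (t : ℕ) := by rw [← hbt]; exact hab'
        exact Fin.lt_def.mpr (by omega)
      · rw [Equiv.swap_apply_of_ne_of_ne hat has, Equiv.swap_apply_of_ne_of_ne hbt hbs]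
        exact hab
  exact (congrFun (Finset.orderEmbOfFin_unique hS'c hmem hmono) i).symm

lemma shuffle_swap (S : Finset (Fin n)) (s t : Fin n) (hs : s ∈ S) (ht : t ∉ S)
    (hts : (t : ℕ) + 1 = (s : ℕ)) :
    shuffle (insert t (S.erase s)) = Equiv.swap t s * shuffle S := by
  have htE : t ∉ S.erase s := fun hc => ht (Finset.mem_of_mem_erase hc)
  have hcard : (insert t (S.erase s)).card = S.card := by
    rw [Finset.card_insert_of_notMem htE, Finset.card_erase_of_mem hs]
    have : 1 ≤ S.card := Finset.card_pos.mpr ⟨s, hs⟩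
    omega
  have hcardc : (insert t (S.erase s))ᶜ.card = Sᶜ.card := by
    rw [card_compl_fin, card_compl_fin, hcard]
  refine Equiv.ext fun p => ?_
  rw [Equiv.Perm.mul_apply]
  by_cases hp : (p : ℕ) < S.card
  · rw [shuffle_apply_lt S rfl p hp, shuffle_apply_lt (insert t (S.erase s)) hcard p hp]
    exact swap_emb_eq S s t hs ht hts rfl hcard _
  · have h1 : S.card ≤ (p : ℕ) := by omega
    have h2 : (p : ℕ) - S.card < Sᶜ.card := by
      rw [card_compl_fin]; have := p.isLt; have := card_le_fin S; omega
    rw [shuffle_apply_ge S rfl p h1 h2]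
    have h1' : (insert t (S.erase s)).card ≤ (p : ℕ) := by omega
    have h2' : (p : ℕ) - (insert t (S.erase s)).card < Sᶜ.card := by
      rw [hcard]; exact h2
    have := shuffle_apply_ge (insert t (S.erase s)) hcardc p h1' (by rw [hcard]; exact h2)
    rw [this]
    have hmk : (⟨(p : ℕ) - (insert t (S.erase s)).card, h2'⟩ : Fin Sᶜ.card) =
        ⟨(p : ℕ) - S.card, h2⟩ := by
      congr 1
      rw [hcard]
    rw [hmk]
    exact swap_emb_eq_compl S s t hs ht hts rfl hcardc _
end Swap

section Sign
variable {n : ℕ}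

/-- If a finset of `Fin n` has no "move" (element whose predecessor is outside),
it is downward closed. -/
lemma good_of_no_move (S : Finset (Fin n))
    (h : ∀ s ∈ S, ∀ t : Fin n, (t : ℕ) + 1 = (s : ℕ) → t ∈ S) :
    ∀ s ∈ S, ∀ t : Fin n, (t : ℕ) < (s : ℕ) → t ∈ S := by
  have key : ∀ (d : ℕ) (s : Fin n), s ∈ S → ∀ t : Fin n, (t : ℕ) + d = (s : ℕ) → t ∈ S := by
    intro d
    induction d with
    | zero => intro s hs t hts; have : t = s := Fin.ext (by omega); exact this ▸ hs
    | succ d ih =>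
      intro s hs t hts
      have hlt : (t : ℕ) + 1 < n := by have := s.isLt; omega
      have ht' : (⟨(t : ℕ) + 1, hlt⟩ : Fin n) ∈ S := ih s hs ⟨(t : ℕ) + 1, hlt⟩ (by simp; omega)
      exact h _ ht' t (by simp)
  intro s hs t hts
  exact key ((s : ℕ) - (t : ℕ)) s hs t (by omega)

lemma good_eq (S T : Finset (Fin n)) (hcard : S.card = T.card)
    (hS : ∀ s ∈ S, ∀ t : Fin n, (t : ℕ) < (s : ℕ) → t ∈ S)
    (hT : ∀ s ∈ T, ∀ t : Fin n, (t : ℕ) < (s : ℕ) → t ∈ T) : S = T := by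
  have key : ∀ (U : Finset (Fin n)), (∀ s ∈ U, ∀ t : Fin n, (t : ℕ) < (s : ℕ) → t ∈ U) →
      U = Finset.univ.filter (fun x : Fin n => (x : ℕ) < U.card) := by
    intro U hU
    have hsub : U ⊆ Finset.univ.filter (fun x : Fin n => (x : ℕ) < U.card) := by
      intro x hx
      rw [Finset.mem_filter]
      refine ⟨Finset.mem_univ x, ?_⟩
      have hIic : Finset.Iic x ⊆ U := by
        intro t htx
        rw [Finset.mem_Iic] at htx
        rcases lt_or_eq_of_le htx with hlt | heq
        · exact hU x hx t hlt
        · exact heq ▸ hx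
      have h1 : (Finset.Iic x).card ≤ U.card := Finset.card_le_card hIic
      have h2 : (Finset.Iic x).card = (x : ℕ) + 1 := by simpa using Fin.card_Iic x
      omega
    have hle : (Finset.univ.filter (fun x : Fin n => (x : ℕ) < U.card)).card ≤ U.card := by
      have himg : (Finset.univ.filter (fun x : Fin n => (x : ℕ) < U.card)).image Fin.val ⊆
          Finset.range U.card := by
        intro a ha
        simp only [Finset.mem_image, Finset.mem_filter] at ha
        obtain ⟨x, ⟨_, hx⟩, rfl⟩ := ha
        exact Finset.mem_range.mpr hx
      calc (Finset.univ.filter (fun x : Fin n => (x : ℕ) < U.card)).card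
          = ((Finset.univ.filter (fun x : Fin n => (x : ℕ) < U.card)).image Fin.val).card := by
            rw [Finset.card_image_of_injective _ Fin.val_injective]
        _ ≤ (Finset.range U.card).card := Finset.card_le_card himg
        _ = U.card := Finset.card_range _
    exact Finset.eq_of_subset_of_card_le hsub hle
  have h1 := key S hS
  have h2 := key T hT
  rw [h1, h2, hcard]

end Sign

section SignMul
variable {n : ℕ}

lemma sign_shuffle_move (S : Finset (Fin n)) (s t : Fin n) (hs : s ∈ S) (ht : t ∉ S)
    (hts : (t : ℕ) + 1 = (s : ℕ)) :
    Equiv.Perm.sign (shuffle (insert t (S.erase s))) = - Equiv.Perm.sign (shuffle S) := by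
  rw [shuffle_swap S s t hs ht hts, _root_.map_mul, Equiv.Perm.sign_swap (by
    intro hc; rw [hc] at hts; omega)]
  rw [neg_one_mul]

lemma sum_shuffle_move (S : Finset (Fin n)) (s t : Fin n) (hs : s ∈ S) (ht : t ∉ S)
    (hts : (t : ℕ) + 1 = (s : ℕ)) :
    (∑ i ∈ insert t (S.erase s), (i : ℕ)) + 1 = ∑ i ∈ S, (i : ℕ) := by
  have htE : t ∉ S.erase s := fun hc => ht (Finset.mem_of_mem_erase hc)
  rw [Finset.sum_insert htE]
  have h1 : (∑ i ∈ S.erase s, (i : ℕ)) + (s : ℕ) = ∑ i ∈ S, (i : ℕ) :=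
    Finset.sum_erase_add S _ hs
  omega

lemma sign_shuffle_self (S : Finset (Fin n)) :
    Equiv.Perm.sign (shuffle S) * Equiv.Perm.sign (shuffle S) =
      (-1 : ℤˣ) ^ ((∑ i ∈ S, (i : ℕ)) + ∑ i ∈ S, (i : ℕ)) := by
  rw [Int.units_mul_self, pow_add, Int.units_mul_self]

lemma sign_shuffle_aux (N : ℕ) : ∀ (S T : Finset (Fin n)), S.card = T.card →
    (∑ i ∈ S, (i : ℕ)) + (∑ i ∈ T, (i : ℕ)) ≤ N →
    Equiv.Perm.sign (shuffle S) * Equiv.Perm.sign (shuffle T) =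
      (-1 : ℤˣ) ^ ((∑ i ∈ S, (i : ℕ)) + ∑ i ∈ T, (i : ℕ)) := by
  induction N with
  | zero =>
    intro S T hc hb
    have hST : S = T := by
      apply good_eq S T hc
      · intro s hsS u hu
        exfalso
        have h1 : (s : ℕ) ≤ ∑ i ∈ S, (i : ℕ) :=
          Finset.single_le_sum (fun i _ => Nat.zero_le _) hsS
        omega
      · intro s hsT u hu
        exfalso
        have h1 : (s : ℕ) ≤ ∑ i ∈ T, (i : ℕ) :=
          Finset.single_le_sum (fun i _ => Nat.zero_le _) hsT
        omega
    subst hST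
    exact sign_shuffle_self S
  | succ N ih =>
    intro S T hc hb
    by_cases hmS : ∃ s ∈ S, ∃ t : Fin n, t ∉ S ∧ (t : ℕ) + 1 = (s : ℕ)
    · obtain ⟨s, hs, t, ht, hts⟩ := hmS
      have hcard : (insert t (S.erase s)).card = S.card := by
        rw [Finset.card_insert_of_notMem (fun hc => ht (Finset.mem_of_mem_erase hc)),
          Finset.card_erase_of_mem hs]
        have : 1 ≤ S.card := Finset.card_pos.mpr ⟨s, hs⟩
        omega
      have hsum := sum_shuffle_move S s t hs ht hts
      have hrec := ih (insert t (S.erase s)) T (hcard.trans hc) (by omega)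
      have hsign := sign_shuffle_move S s t hs ht hts
      have h2 : Equiv.Perm.sign (shuffle S) = - Equiv.Perm.sign (shuffle (insert t (S.erase s))) := by
        rw [hsign, neg_neg]
      rw [h2, neg_mul, hrec]
      have hexp : (∑ i ∈ S, (i : ℕ)) + ∑ i ∈ T, (i : ℕ) =
          ((∑ i ∈ insert t (S.erase s), (i : ℕ)) + ∑ i ∈ T, (i : ℕ)) + 1 := by omega
      rw [hexp, pow_succ, mul_neg_one]
    · by_cases hmT : ∃ s ∈ T, ∃ t : Fin n, t ∉ T ∧ (t : ℕ) + 1 = (s : ℕ)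
      · obtain ⟨s, hs, t, ht, hts⟩ := hmT
        have hcard : (insert t (T.erase s)).card = T.card := by
          rw [Finset.card_insert_of_notMem (fun hc => ht (Finset.mem_of_mem_erase hc)),
            Finset.card_erase_of_mem hs]
          have : 1 ≤ T.card := Finset.card_pos.mpr ⟨s, hs⟩
          omega
        have hsum := sum_shuffle_move T s t hs ht hts
        have hrec := ih S (insert t (T.erase s)) (hc.trans hcard.symm) (by omega)
        have hsign := sign_shuffle_move T s t hs ht hts
        have h2 : Equiv.Perm.sign (shuffle T) = - Equiv.Perm.sign (shuffle (insert t (T.erase s))) := by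
          rw [hsign, neg_neg]
        rw [h2, mul_neg, hrec]
        have hexp : (∑ i ∈ S, (i : ℕ)) + ∑ i ∈ T, (i : ℕ) =
            ((∑ i ∈ S, (i : ℕ)) + ∑ i ∈ insert t (T.erase s), (i : ℕ)) + 1 := by omega
        rw [hexp, pow_succ, mul_neg_one]
      · have hST : S = T := by
          push_neg at hmS hmT
          apply good_eq S T hc
          · apply good_of_no_move
            intro s hsS u hu
            by_contra huS
            exact huS (by
              exfalso
              exact huS ((fun h => h) (by
                have := hmS s hsS u
                tauto)))
          · apply good_of_no_move
            intro s hsT u hu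
            by_contra huT
            have := hmT s hsT u
            tauto
        subst hST
        exact sign_shuffle_self S

lemma sign_shuffle_mul (S T : Finset (Fin n)) (hc : S.card = T.card) :
    Equiv.Perm.sign (shuffle S) * Equiv.Perm.sign (shuffle T) =
      (-1 : ℤˣ) ^ ((∑ i ∈ S, (i : ℕ)) + ∑ i ∈ T, (i : ℕ)) :=
  sign_shuffle_aux _ S T hc le_rfl

end SignMul

section DetE
variable {K : Type*} [CommRing K] {n : ℕ}

lemma neg_one_pow_units_cast (m : ℕ) :
    ((((-1 : ℤˣ) ^ m : ℤˣ) : ℤ) : K) = (-1 : K) ^ m := by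
  rw [Units.val_pow_eq_pow_val, Units.val_neg, Units.val_one, Int.cast_pow, Int.cast_neg,
    Int.cast_one]

lemma shuffle_e_inl (S : Finset (Fin n)) {k m : ℕ} (hS : S.card = k) (hkm : k + m = n)
    (q : Fin k) :
    shuffle S ((finSumFinEquiv.trans (finCongr hkm)) (Sum.inl q)) = S.orderEmbOfFin hS q := by
  have hval : (((finSumFinEquiv.trans (finCongr hkm)) (Sum.inl q) : Fin n) : ℕ) = (q : ℕ) := by
    simp
  rw [shuffle_apply_lt S hS _ (by rw [hval]; exact q.isLt)]
  exact congrArg _ (Fin.ext hval)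

lemma shuffle_e_inr (S : Finset (Fin n)) {k m : ℕ} (hS : S.card = k) (hSc : Sᶜ.card = m)
    (hkm : k + m = n) (q : Fin m) :
    shuffle S ((finSumFinEquiv.trans (finCongr hkm)) (Sum.inr q)) = Sᶜ.orderEmbOfFin hSc q := by
  have hval : (((finSumFinEquiv.trans (finCongr hkm)) (Sum.inr q) : Fin n) : ℕ) = k + (q : ℕ) := by
    simp
  rw [shuffle_apply_ge S hSc _ (by omega) (by rw [hval, hS]; omega)]
  congr 1
  apply Fin.ext
  simp only [Fin.val_mk]
  rw [hval, hS]
  omega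

lemma detE {k m : ℕ} (hkm : k + m = n) (M : Matrix (Fin n) (Fin n) K)
    (S L : Finset (Fin n)) (hS : S.card = k) (hL : L.card = k)
    (hSc : Sᶜ.card = m) (hLc : Lᶜ.card = m)
    (hcol : ∀ (q : Fin k) (i : Fin n),
      M i (S.orderEmbOfFin hS q) = if i = L.orderEmbOfFin hL q then 1 else 0) :
    M.det = (-1 : K) ^ ((∑ i ∈ S, (i : ℕ)) + ∑ i ∈ L, (i : ℕ)) *
      (M.submatrix (Lᶜ.orderEmbOfFin hLc) (Sᶜ.orderEmbOfFin hSc)).det := by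
  set e : Fin k ⊕ Fin m ≃ Fin n := finSumFinEquiv.trans (finCongr hkm) with he
  set E := (∑ i ∈ S, (i : ℕ)) + ∑ i ∈ L, (i : ℕ) with hE
  set D := M.submatrix (Lᶜ.orderEmbOfFin hLc) (Sᶜ.orderEmbOfFin hSc) with hD
  have hblocks : (M.submatrix (shuffle L) (shuffle S)).submatrix e e =
      Matrix.fromBlocks 1
        (Matrix.of fun (p : Fin k) (q : Fin m) =>
          M (L.orderEmbOfFin hL p) (Sᶜ.orderEmbOfFin hSc q)) 0 D := by
    ext x y
    rcases x with p | p <;> rcases y with q | q <;>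
      simp only [Matrix.submatrix_apply, Matrix.fromBlocks_apply₁₁, Matrix.fromBlocks_apply₁₂,
        Matrix.fromBlocks_apply₂₁, Matrix.fromBlocks_apply₂₂, Matrix.of_apply, Matrix.zero_apply]
    · rw [shuffle_e_inl L hL hkm p, shuffle_e_inl S hS hkm q, hcol q]
      simp [Matrix.one_apply, ((L.orderEmbOfFin hL)).injective.eq_iff]
    · rw [shuffle_e_inl L hL hkm p, shuffle_e_inr S hS hSc hkm q]
    · rw [shuffle_e_inr L hL hLc hkm p, shuffle_e_inl S hS hkm q, hcol q]
      have hne : Lᶜ.orderEmbOfFin hLc p ≠ L.orderEmbOfFin hL q := by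
        intro hc
        have h1 : Lᶜ.orderEmbOfFin hLc p ∈ Lᶜ := Lᶜ.orderEmbOfFin_mem hLc p
        have h2 : L.orderEmbOfFin hL q ∈ L := L.orderEmbOfFin_mem hL q
        rw [hc] at h1
        exact (Finset.mem_compl.mp h1) h2
      rw [if_neg hne]
    · rw [shuffle_e_inr L hL hLc hkm p, shuffle_e_inr S hS hSc hkm q]
      rfl
  have hdetD : D.det = ((Equiv.Perm.sign (shuffle S) : ℤ) : K) *
      (((Equiv.Perm.sign (shuffle L) : ℤ) : K) * M.det) := by
    have h2 : ((M.submatrix (shuffle L) (shuffle S)).submatrix e e).det =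
        (M.submatrix (shuffle L) (shuffle S)).det := Matrix.det_submatrix_equiv_self e _
    have h3 : M.submatrix (shuffle L) (shuffle S) =
        (M.submatrix (shuffle L) id).submatrix id (shuffle S) := by
      rw [Matrix.submatrix_submatrix]
      rfl
    have h4 := Matrix.det_permute' (shuffle S) (M.submatrix (shuffle L) id)
    have h5 := Matrix.det_permute (shuffle L) M
    calc D.det = (Matrix.fromBlocks 1
        (Matrix.of fun (p : Fin k) (q : Fin m) =>
          M (L.orderEmbOfFin hL p) (Sᶜ.orderEmbOfFin hSc q)) 0 D).det := by
          rw [Matrix.det_fromBlocks_zero₂₁, Matrix.det_one, one_mul]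
      _ = (M.submatrix (shuffle L) (shuffle S)).det := by rw [← hblocks, h2]
      _ = ((Equiv.Perm.sign (shuffle S) : ℤ) : K) *
          (((Equiv.Perm.sign (shuffle L) : ℤ) : K) * M.det) := by
          rw [h3, h4, h5]
  have hsign : ((Equiv.Perm.sign (shuffle S) : ℤ) : K) *
      ((Equiv.Perm.sign (shuffle L) : ℤ) : K) = (-1 : K) ^ E := by
    have h6 := sign_shuffle_mul S L (hS.trans hL.symm)
    calc ((Equiv.Perm.sign (shuffle S) : ℤ) : K) * ((Equiv.Perm.sign (shuffle L) : ℤ) : K)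
        = (((Equiv.Perm.sign (shuffle S) * Equiv.Perm.sign (shuffle L) : ℤˣ) : ℤ) : K) := by
          push_cast; ring
      _ = (-1 : K) ^ E := by rw [h6]; exact neg_one_pow_units_cast E
  have hsq : ((-1 : K) ^ E) * ((-1 : K) ^ E) = 1 := by
    rw [← pow_add]
    exact Even.neg_one_pow ⟨E, rfl⟩
  rw [hdetD]
  have hre : (-1 : K) ^ E * (((Equiv.Perm.sign (shuffle S) : ℤ) : K) *
      (((Equiv.Perm.sign (shuffle L) : ℤ) : K) * M.det)) =
      ((-1 : K) ^ E * (((Equiv.Perm.sign (shuffle S) : ℤ) : K) *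
        ((Equiv.Perm.sign (shuffle L) : ℤ) : K))) * M.det := by ring
  rw [hre, hsign, hsq, one_mul]

end DetE

section Duality
variable {K : Type*} [Field K]

open Submodule in
lemma duality {r k n : ℕ} (hn : r + k = n) (R : Matrix (Fin r) (Fin n) K)
    (hsurj : Function.Surjective ⇑R.mulVecLin) :
    ∃ (x : Fin k → Fin n → K) (c : K), c ≠ 0 ∧ LinearIndependent K x ∧
      Submodule.span K (Set.range x) = LinearMap.ker R.mulVecLin ∧
      ∀ (S : Finset (Fin n)) (hS : S.card = k) (hSc : Sᶜ.card = r),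
        wedgeVec x ⟨S, hS⟩ =
          c * (-1 : K) ^ (∑ i ∈ S, (i : ℕ)) *
            (R.submatrix id (Sᶜ.orderEmbOfFin hSc)).det := by
  classical
  -- rows of R are linearly independent
  have hrows : LinearIndependent K (fun i => R i) := by
    rw [Fintype.linearIndependent_iff]
    intro g hg i
    have hvm : g ᵥ* R = 0 := by
      funext j
      have := congrFun hg j
      simpa [Matrix.vecMul, dotProduct, Finset.sum_apply] using this
    obtain ⟨z, hz⟩ := hsurj (Pi.single i 1)
    have h1 : g ⬝ᵥ (R *ᵥ z) = 0 := by
      rw [Matrix.dotProduct_mulVec, hvm]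
      simp [dotProduct]
    rw [Matrix.mulVecLin_apply] at hz
    rw [hz] at h1
    simpa using h1
  -- complete the rows of R to a basis-like family
  set W := Submodule.span K (Set.range (fun i => R i)) with hW
  obtain ⟨W', hcompl⟩ := Submodule.exists_isCompl W
  have hfinW : Module.finrank K W = r := by
    rw [hW, finrank_span_eq_card hrows]
    simp
  have hfinV : Module.finrank K (Fin n → K) = n := by simp
  have hfinW' : Module.finrank K W' = k := by
    have := Submodule.finrank_add_eq_of_isCompl hcompl
    omega
  set b' : Module.Basis (Fin k) K W' := Module.finBasisOfFinrankEq K W' hfinW' with hb'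
  set v : Fin r ⊕ Fin k → (Fin n → K) := Sum.elim (fun i => R i) (fun j => (b' j : Fin n → K))
    with hv
  have hspan' : Submodule.span K (Set.range (fun j => (b' j : Fin n → K))) = W' := by
    have h1 : Set.range (fun j => (b' j : Fin n → K)) = W'.subtype '' Set.range b' := by
      rw [← Set.range_comp]; rfl
    rw [h1, ← Submodule.map_span, b'.span_eq, Submodule.map_top, Submodule.range_subtype]
  have hli' : LinearIndependent K (fun j => (b' j : Fin n → K)) :=
    b'.linearIndependent.map' W'.subtype (Submodule.ker_subtype W')
  have hliv : LinearIndependent K v :=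
    LinearIndependent.sum_type hrows hli' (by rw [← hW, hspan']; exact hcompl.disjoint)
  set eqv : Fin n ≃ Fin r ⊕ Fin k := (finCongr hn.symm).trans finSumFinEquiv.symm with heqv
  set Q : Matrix (Fin n) (Fin n) K := Matrix.of fun i j => v (eqv i) j with hQ
  set f₁ : Fin r → Fin n := fun p => eqv.symm (Sum.inl p) with hf₁
  set f₂ : Fin k → Fin n := fun j => eqv.symm (Sum.inr j) with hf₂
  have hf₁val : ∀ p : Fin r, (f₁ p : ℕ) = (p : ℕ) := by
    intro p; simp [hf₁, heqv, finSumFinEquiv]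
  have hf₂val : ∀ j : Fin k, (f₂ j : ℕ) = r + (j : ℕ) := by
    intro j; simp [hf₂, heqv, finSumFinEquiv]
  have hQrow1 : ∀ (p : Fin r) (j : Fin n), Q (f₁ p) j = R p j := by
    intro p j; simp [hQ, hf₁, hv]
  -- Q is invertible
  have hQli : LinearIndependent K (fun i => Q i) := by
    have : (fun i => Q i) = v ∘ eqv := by funext i; rfl
    rw [this]
    exact hliv.comp eqv eqv.injective
  have hdetQ : Q.det ≠ 0 := by
    intro hdet
    obtain ⟨g, hg0, hgQ⟩ := Matrix.exists_vecMul_eq_zero_iff.mpr hdet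
    apply hg0
    have := (Fintype.linearIndependent_iff.mp hQli) g (by
      funext j
      have := congrFun hgQ j
      simpa [Matrix.vecMul, dotProduct, Finset.sum_apply] using this)
    funext i; exact this i
  have hQunit : IsUnit Q.det := isUnit_iff_ne_zero.mpr hdetQ
  set B : Matrix (Fin n) (Fin n) K := Q⁻¹ with hB
  have hQB : Q * B = 1 := Matrix.mul_nonsing_inv Q hQunit
  have hBQ : B * Q = 1 := Matrix.nonsing_inv_mul Q hQunit
  -- the candidate kernel basis
  set x : Fin k → Fin n → K := fun j i => B i (f₂ j) with hx
  have hf₁f₂ : ∀ (p : Fin r) (j : Fin k), f₁ p ≠ f₂ j := by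
    intro p j hc
    have h1 := hf₁val p
    have h2 := hf₂val j
    rw [hc] at h1
    omega
  have hxker : ∀ j, x j ∈ LinearMap.ker R.mulVecLin := by
    intro j
    rw [LinearMap.mem_ker, Matrix.mulVecLin_apply]
    funext p
    have h1 : (R *ᵥ x j) p = (Q * B) (f₁ p) (f₂ j) := by
      rw [Matrix.mul_apply]
      simp only [Matrix.mulVec, dotProduct]
      exact Finset.sum_congr rfl fun l _ => by rw [hQrow1]
    rw [Pi.zero_apply, h1, hQB, Matrix.one_apply_ne (hf₁f₂ p j)]
  have hxli : LinearIndependent K x := by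
    rw [Fintype.linearIndependent_iff]
    intro g hg
    set w : Fin n → K := fun l => Sum.elim (fun _ => (0 : K)) g (eqv l) with hw
    have hBw : B *ᵥ w = 0 := by
      funext i
      have h1 : (B *ᵥ w) i = ∑ l, B i l * w l := by
        simp [Matrix.mulVec, dotProduct]
      rw [h1, ← Equiv.sum_comp eqv.symm (fun l => B i l * w l), Fintype.sum_sum_type]
      have h2 : ∀ p : Fin r, B i (eqv.symm (Sum.inl p)) * w (eqv.symm (Sum.inl p)) = 0 := by
        intro p
        have : w (eqv.symm (Sum.inl p)) = 0 := by simp [hw]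
        rw [this, mul_zero]
      have h3 : ∀ j : Fin k, B i (eqv.symm (Sum.inr j)) * w (eqv.symm (Sum.inr j)) =
          g j * x j i := by
        intro j
        have : w (eqv.symm (Sum.inr j)) = g j := by simp [hw]
        rw [this, hx]
        ring
      rw [Finset.sum_congr rfl fun p _ => h2 p, Finset.sum_congr rfl fun j _ => h3 j]
      have h4 := congrFun hg i
      simpa [Finset.sum_apply] using h4
    have hw0 : w = 0 := by
      have h5 : Q *ᵥ (B *ᵥ w) = w := by
        rw [Matrix.mulVec_mulVec, hQB, Matrix.one_mulVec]
      rw [hBw, Matrix.mulVec_zero] at h5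
      exact h5.symm
    intro j
    have : w (f₂ j) = g j := by simp [hw, hf₂]
    rw [hw0] at this
    exact this.symm.trans rfl
  -- span x = ker R
  have hspanker : Submodule.span K (Set.range x) = LinearMap.ker R.mulVecLin := by
    apply Submodule.eq_of_le_of_finrank_eq
    · rw [Submodule.span_le]
      rintro _ ⟨j, rfl⟩
      exact hxker j
    · have h1 := LinearMap.finrank_range_add_finrank_ker R.mulVecLin
      have h2 : LinearMap.range R.mulVecLin = ⊤ := LinearMap.range_eq_top.mpr hsurj
      rw [h2, finrank_top] at h1
      have h3 : Module.finrank K (Fin r → K) = r := by simp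
      have h4 : Module.finrank K ↥(Submodule.span K (Set.range x)) = k := by
        rw [finrank_span_eq_card hxli]; simp
      rw [h4]
      omega
  -- the special index set L = {r, ..., n-1}
  have hf₂inj : Function.Injective f₂ := fun a b hab => Sum.inr_injective (eqv.symm.injective hab)
  set L : Finset (Fin n) := Finset.univ.filter (fun j : Fin n => r ≤ (j : ℕ)) with hL
  have hLeq : L = Finset.image f₂ Finset.univ := by
    ext j
    simp only [hL, Finset.mem_filter, Finset.mem_univ, true_and, Finset.mem_image]
    constructor
    · intro hj
      have hjn := j.isLt
      refine ⟨⟨(j : ℕ) - r, by omega⟩, ?_⟩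
      apply Fin.ext
      rw [hf₂val]
      simp
      omega
    · rintro ⟨p, rfl⟩
      rw [hf₂val]
      omega
  have hLcard : L.card = k := by
    rw [hLeq, Finset.card_image_of_injective _ hf₂inj, Finset.card_univ, Fintype.card_fin]
  have hLcc : Lᶜ.card = r := by rw [card_compl_fin, hLcard]; omega
  have hembL : ∀ q : Fin k, L.orderEmbOfFin hLcard q = f₂ q := by
    have hmem : ∀ q : Fin k, f₂ q ∈ L := by
      intro q
      simp only [hL, Finset.mem_filter, Finset.mem_univ, true_and]
      rw [hf₂val]
      omega
    have hmono : StrictMono f₂ := by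
      intro a b hab
      rw [Fin.lt_def, hf₂val, hf₂val]
      have : (a : ℕ) < (b : ℕ) := hab
      omega
    have := Finset.orderEmbOfFin_unique hLcard hmem hmono
    exact fun q => (congrFun this q).symm
  have hembLc : ∀ p : Fin r, Lᶜ.orderEmbOfFin hLcc p = f₁ p := by
    have hmem : ∀ p : Fin r, f₁ p ∈ Lᶜ := by
      intro p
      simp only [Finset.mem_compl, hL, Finset.mem_filter, Finset.mem_univ, true_and]
      rw [hf₁val]
      have := p.isLt
      omega
    have hmono : StrictMono f₁ := by
      intro a b hab
      rw [Fin.lt_def, hf₁val, hf₁val]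
      exact hab
    have := Finset.orderEmbOfFin_unique hLcc hmem hmono
    exact fun p => (congrFun this p).symm
  refine ⟨x, Q.det⁻¹ * (-1 : K) ^ (∑ i ∈ L, (i : ℕ)),
    mul_ne_zero (inv_ne_zero hdetQ) (pow_ne_zero _ (by norm_num)), hxli, hspanker, ?_⟩
  intro S hS hSc
  set N : Matrix (Fin n) (Fin n) K := Matrix.of fun i j =>
    if h : j ∈ S then B i (f₂ ((S.orderIsoOfFin hS).symm ⟨j, h⟩))
    else (if i = j then 1 else 0) with hN
  have hiso : ∀ q : Fin k,
      (S.orderIsoOfFin hS).symm ⟨S.orderEmbOfFin hS q, S.orderEmbOfFin_mem hS q⟩ = q := by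
    intro q
    rw [OrderIso.symm_apply_eq]
    exact Subtype.ext (S.coe_orderIsoOfFin_apply hS q).symm
  have hNS : ∀ (q : Fin k) (i : Fin n), N i (S.orderEmbOfFin hS q) = B i (f₂ q) := by
    intro q i
    rw [hN]
    simp only [Matrix.of_apply]
    rw [dif_pos (S.orderEmbOfFin_mem hS q), hiso q]
  have hNSc : ∀ (q : Fin r) (i : Fin n), N i (Sᶜ.orderEmbOfFin hSc q) =
      if i = Sᶜ.orderEmbOfFin hSc q then 1 else 0 := by
    intro q i
    rw [hN]
    simp only [Matrix.of_apply]
    rw [dif_neg (Finset.mem_compl.mp (Sᶜ.orderEmbOfFin_mem hSc q))]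
  have hScc : Sᶜᶜ.card = k := by rw [compl_compl]; exact hS
  have hdetN : N.det = wedgeVec x ⟨S, hS⟩ := by
    have hdE := detE hn N Sᶜ Sᶜ hSc hSc hScc hScc hNSc
    have hsgn : (-1 : K) ^ ((∑ i ∈ Sᶜ, (i : ℕ)) + ∑ i ∈ Sᶜ, (i : ℕ)) = 1 :=
      Even.neg_one_pow ⟨_, rfl⟩
    have hmat : N.submatrix (Sᶜᶜ.orderEmbOfFin hScc) (Sᶜᶜ.orderEmbOfFin hScc) =
        Matrix.of fun (i j : Fin k) => x j (S.orderEmbOfFin hS i) := by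
      ext i q
      rw [Matrix.submatrix_apply, orderEmbOfFin_congr (compl_compl S) hScc hS i,
        orderEmbOfFin_congr (compl_compl S) hScc hS q, hNS q]
      rfl
    rw [hdE, hsgn, one_mul, hmat]
    rfl
  have hkr : k + r = n := by omega
  have hcolQN : ∀ (q : Fin k) (i : Fin n), (Q * N) i (S.orderEmbOfFin hS q) =
      if i = L.orderEmbOfFin hLcard q then 1 else 0 := by
    intro q i
    rw [Matrix.mul_apply]
    calc ∑ l, Q i l * N l (S.orderEmbOfFin hS q)
        = ∑ l, Q i l * B l (f₂ q) := Finset.sum_congr rfl (fun l _ => by rw [hNS q l])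
      _ = (Q * B) i (f₂ q) := (Matrix.mul_apply).symm
      _ = (1 : Matrix (Fin n) (Fin n) K) i (f₂ q) := by rw [hQB]
      _ = if i = L.orderEmbOfFin hLcard q then 1 else 0 := by
          rw [Matrix.one_apply, hembL q]
  have hdQN := detE hkr (Q * N) S L hS hLcard hSc hLcc hcolQN
  have hsub : (Q * N).submatrix (Lᶜ.orderEmbOfFin hLcc) (Sᶜ.orderEmbOfFin hSc) =
      R.submatrix id (Sᶜ.orderEmbOfFin hSc) := by
    ext p q
    rw [Matrix.submatrix_apply, Matrix.submatrix_apply, hembLc p, Matrix.mul_apply]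
    calc ∑ l, Q (f₁ p) l * N l (Sᶜ.orderEmbOfFin hSc q)
        = ∑ l, Q (f₁ p) l * (if l = Sᶜ.orderEmbOfFin hSc q then 1 else 0) :=
          Finset.sum_congr rfl (fun l _ => by rw [hNSc q l])
      _ = Q (f₁ p) (Sᶜ.orderEmbOfFin hSc q) := by
          simp [mul_ite]
      _ = R p (Sᶜ.orderEmbOfFin hSc q) := hQrow1 p _
  have hdetmul : Q.det * N.det =
      (-1 : K) ^ ((∑ i ∈ S, (i : ℕ)) + ∑ i ∈ L, (i : ℕ)) *
        (R.submatrix id (Sᶜ.orderEmbOfFin hSc)).det := by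
    rw [← Matrix.det_mul, hdQN, hsub]
  rw [← hdetN]
  have hNdet : N.det = Q.det⁻¹ * (Q.det * N.det) := by rw [inv_mul_cancel_left₀ hdetQ]
  rw [hNdet, hdetmul, pow_add]
  ring

end Duality

section MinorExtract
variable {K : Type*} [Field K]

lemma surj_of_rank {r n : ℕ} (M : Matrix (Fin r) (Fin n) K) (h : M.rank = r) :
    Function.Surjective ⇑M.mulVecLin := by
  rw [← LinearMap.range_eq_top]
  apply Submodule.eq_top_of_finrank_eq
  have h1 : Module.finrank K ↥(LinearMap.range M.mulVecLin) = r := h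
  rw [h1]
  simp

lemma exists_nonzero_minor {r n : ℕ} (M : Matrix (Fin r) (Fin n) K)
    (hsurj : Function.Surjective ⇑M.mulVecLin) :
    ∃ (T : Finset (Fin n)) (hT : T.card = r),
      (M.submatrix id (T.orderEmbOfFin hT)).det ≠ 0 := by
  classical
  have hcols : Submodule.span K (Set.range Mᵀ) = ⊤ := by
    change Submodule.span K (Set.range (Matrix.col M)) = ⊤
    rw [← Matrix.range_mulVecLin]
    exact LinearMap.range_eq_top.mpr hsurj
  obtain ⟨t, hsub, hspant, hli⟩ := exists_linearIndependent K (Set.range Mᵀ)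
  rw [hcols] at hspant
  have hfin : t.Finite := hli.setFinite
  haveI : Fintype t := hfin.fintype
  have hb : ⊤ ≤ Submodule.span K (Set.range (Subtype.val : t → (Fin r → K))) := by
    rw [Subtype.range_coe]
    rw [hspant]
  set b : Module.Basis t K (Fin r → K) := Module.Basis.mk hli hb with hbdef
  have hcardt : Fintype.card t = r := by
    rw [← Module.finrank_eq_card_basis b]
    simp
  have hchoice : ∀ w : t, ∃ j : Fin n, Mᵀ j = (w : Fin r → K) := fun w => hsub w.2
  choose φ hφ using hchoice
  have hφinj : Function.Injective φ := by
    intro w w' hww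
    have : Mᵀ (φ w) = Mᵀ (φ w') := by rw [hww]
    rw [hφ w, hφ w'] at this
    exact Subtype.ext this
  set T : Finset (Fin n) := Finset.univ.image φ with hT
  have hTcard : T.card = r := by
    rw [hT, Finset.card_image_of_injective _ hφinj, Finset.card_univ, hcardt]
  refine ⟨T, hTcard, ?_⟩
  -- the selected columns are linearly independent
  have hmemt : ∀ q : Fin r, Mᵀ (T.orderEmbOfFin hTcard q) ∈ t := by
    intro q
    have : T.orderEmbOfFin hTcard q ∈ T := T.orderEmbOfFin_mem hTcard q
    obtain ⟨w, _, hw⟩ := Finset.mem_image.mp this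
    rw [← hw, hφ w]
    exact w.2
  have hcolli : LinearIndependent K (fun q : Fin r => Mᵀ (T.orderEmbOfFin hTcard q)) := by
    have hinj : Function.Injective (fun q : Fin r =>
        (⟨Mᵀ (T.orderEmbOfFin hTcard q), hmemt q⟩ : t)) := by
      intro q q' hqq
      have h1 : Mᵀ (T.orderEmbOfFin hTcard q) = Mᵀ (T.orderEmbOfFin hTcard q') :=
        congrArg Subtype.val hqq
      -- recover injectivity of the embedding through φ
      have h2 : T.orderEmbOfFin hTcard q ∈ T := T.orderEmbOfFin_mem hTcard q
      have h3 : T.orderEmbOfFin hTcard q' ∈ T := T.orderEmbOfFin_mem hTcard q'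
      obtain ⟨w, _, hw⟩ := Finset.mem_image.mp h2
      obtain ⟨w', _, hw'⟩ := Finset.mem_image.mp h3
      have h4 : Mᵀ (φ w) = Mᵀ (φ w') := by rw [hw, hw']; exact h1
      rw [hφ w, hφ w'] at h4
      have h5 : w = w' := Subtype.ext h4
      have h6 : T.orderEmbOfFin hTcard q = T.orderEmbOfFin hTcard q' := by
        rw [← hw, ← hw', h5]
      exact (T.orderEmbOfFin hTcard).injective h6
    exact hli.comp _ hinj
  intro hdet
  obtain ⟨z, hz0, hzM⟩ := Matrix.exists_mulVec_eq_zero_iff.mpr hdet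
  apply hz0
  have := (Fintype.linearIndependent_iff.mp hcolli) z (by
    funext p
    have := congrFun hzM p
    simpa [Matrix.mulVec, dotProduct, Finset.sum_apply, mul_comm] using this)
  funext q
  exact this q

end MinorExtract


end

/-- If `A` is an `n × n` matrix over `K` (`K = ℝ` or `ℂ`) with `rank A = n - k`,
`1 ≤ k ≤ n - 1`, then `adj_k A = u vᵀ` for nonzero vectors `u, v ∈ K^{C(n,k)}`, where
`u` is a basis of the one-dimensional space `⋀^k ker A` (i.e. `u` is the wedge, in
Plücker coordinates, of a basis of `ker A`) and `v` is a basis of `⋀^k ker Aᵀ`. -/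
theorem adjCompound_rank_one_decomposition
    {K : Type*} [RCLike K] {n k : ℕ} (hk1 : 1 ≤ k) (hk2 : k ≤ n - 1)
    (A : Matrix (Fin n) (Fin n) K) (hrank : A.rank = n - k) :
    ∃ u v : {s : Finset (Fin n) // s.card = k} → K,
      u ≠ 0 ∧ v ≠ 0 ∧
      adjCompound k A = Matrix.vecMulVec u v ∧
      (∃ x : Fin k → Fin n → K, LinearIndependent K x ∧
        Submodule.span K (Set.range x) = LinearMap.ker A.mulVecLin ∧ u = wedgeVec x) ∧
      (∃ y : Fin k → Fin n → K, LinearIndependent K y ∧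
        Submodule.span K (Set.range y) = LinearMap.ker Aᵀ.mulVecLin ∧ v = wedgeVec y) := by
  classical
  have hn1 : 1 ≤ n := by omega
  have hkn : k ≤ n := by omega
  have hrk : (n - k) + k = n := by omega
  -- rank factorization A = C * R
  have hfinrange : Module.finrank K ↥(LinearMap.range A.mulVecLin) = n - k := hrank
  set b := Module.finBasisOfFinrankEq K ↥(LinearMap.range A.mulVecLin) hfinrange with hb
  set C : Matrix (Fin n) (Fin (n - k)) K := Matrix.of fun i j => (b j : Fin n → K) i with hC
  have hcolmem : ∀ l : Fin n, (fun i => A i l) ∈ LinearMap.range A.mulVecLin := by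
    intro l
    refine ⟨Pi.single l 1, ?_⟩
    funext i
    simp [Matrix.mulVecLin_apply, Matrix.mulVec, dotProduct, Pi.single_apply]
  set R : Matrix (Fin (n - k)) (Fin n) K :=
    Matrix.of fun j l => b.repr ⟨fun i => A i l, hcolmem l⟩ j with hR
  have hA : A = C * R := by
    ext i l
    rw [Matrix.mul_apply]
    have h1 := Module.Basis.sum_repr b ⟨fun i => A i l, hcolmem l⟩
    have h2 := congrFun (congrArg Subtype.val h1) i
    symm
    calc ∑ j, C i j * R j l
        = ((∑ j, b.repr ⟨fun i => A i l, hcolmem l⟩ j • b j :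
            ↥(LinearMap.range A.mulVecLin)) : Fin n → K) i := by
          rw [AddSubmonoidClass.coe_finset_sum, Finset.sum_apply]
          refine Finset.sum_congr rfl fun j _ => ?_
          simp only [SetLike.val_smul, Pi.smul_apply, smul_eq_mul]
          exact mul_comm _ _
      _ = A i l := h2
  -- ranks of the factors
  have hRrank : R.rank = n - k := by
    refine le_antisymm (Matrix.rank_le_height R) ?_
    calc n - k = A.rank := hrank.symm
      _ = (C * R).rank := by rw [← hA]
      _ ≤ R.rank := Matrix.rank_mul_le_right C R
  have hAt : Aᵀ = Rᵀ * Cᵀ := by rw [hA, Matrix.transpose_mul]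
  have hAtrank : Aᵀ.rank = n - k := by rw [Matrix.rank_transpose, hrank]
  have hCtrank : Cᵀ.rank = n - k := by
    refine le_antisymm (Matrix.rank_le_height Cᵀ) ?_
    calc n - k = Aᵀ.rank := hAtrank.symm
      _ = (Rᵀ * Cᵀ).rank := by rw [← hAt]
      _ ≤ Cᵀ.rank := Matrix.rank_mul_le_right Rᵀ Cᵀ
  have hRsurj := surj_of_rank R hRrank
  have hCtsurj := surj_of_rank Cᵀ hCtrank
  -- kernels
  have hkerR : LinearMap.ker R.mulVecLin = LinearMap.ker A.mulVecLin := by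
    apply Submodule.eq_of_le_of_finrank_eq
    · intro z hz
      rw [LinearMap.mem_ker, Matrix.mulVecLin_apply] at *
      rw [hA, ← Matrix.mulVec_mulVec, hz, Matrix.mulVec_zero]
    · have e1 := LinearMap.finrank_range_add_finrank_ker R.mulVecLin
      have e2 := LinearMap.finrank_range_add_finrank_ker A.mulVecLin
      have h1 : Module.finrank K ↥(LinearMap.range R.mulVecLin) = n - k := hRrank
      have h2 : Module.finrank K ↥(LinearMap.range A.mulVecLin) = n - k := hrank
      rw [h1] at e1
      rw [h2] at e2
      simp only [Module.finrank_pi, Fintype.card_fin] at e1 e2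
      omega
  have hkerC : LinearMap.ker Cᵀ.mulVecLin = LinearMap.ker Aᵀ.mulVecLin := by
    apply Submodule.eq_of_le_of_finrank_eq
    · intro z hz
      rw [LinearMap.mem_ker, Matrix.mulVecLin_apply] at *
      rw [hAt, ← Matrix.mulVec_mulVec, hz, Matrix.mulVec_zero]
    · have e1 := LinearMap.finrank_range_add_finrank_ker Cᵀ.mulVecLin
      have e2 := LinearMap.finrank_range_add_finrank_ker Aᵀ.mulVecLin
      have h1 : Module.finrank K ↥(LinearMap.range Cᵀ.mulVecLin) = n - k := hCtrank
      have h2 : Module.finrank K ↥(LinearMap.range Aᵀ.mulVecLin) = n - k := hAtrank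
      rw [h1] at e1
      rw [h2] at e2
      simp only [Module.finrank_pi, Fintype.card_fin] at e1 e2
      omega
  -- duality applied to both factors
  obtain ⟨x, c₁, hc₁, hxli, hxspan, hxw⟩ := duality hrk R hRsurj
  obtain ⟨y, c₂, hc₂, hyli, hyspan, hyw⟩ := duality hrk Cᵀ hCtsurj
  -- rescale x
  set c : K := c₁ * c₂ with hcdef
  have hcne : c ≠ 0 := mul_ne_zero hc₁ hc₂
  have hk0 : 0 < k := hk1
  set j0 : Fin k := ⟨0, hk0⟩ with hj0
  set x' : Fin k → Fin n → K := (fun j => if j = j0 then c⁻¹ • x j0 else x j) with hx'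
  have hx'w : ∀ S : {s : Finset (Fin n) // s.card = k},
      wedgeVec x' S = c⁻¹ * wedgeVec x S := by
    intro S
    show (Matrix.of fun (i j : Fin k) => x' j (S.1.orderEmbOfFin S.2 i)).det =
      c⁻¹ * (Matrix.of fun (i j : Fin k) => x j (S.1.orderEmbOfFin S.2 i)).det
    set M0 : Matrix (Fin k) (Fin k) K :=
      Matrix.of fun (i j : Fin k) => x j (S.1.orderEmbOfFin S.2 i) with hM0
    have hupd : (Matrix.of fun (i j : Fin k) => x' j (S.1.orderEmbOfFin S.2 i)) =
        M0.updateCol j0 (c⁻¹ • fun i => M0 i j0) := by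
      ext i j
      rw [Matrix.updateCol_apply]
      by_cases hj : j = j0
      · subst hj
        rw [if_pos rfl, hx']
        simp [hM0]
      · rw [if_neg hj, hx']
        simp [hM0, hj]
    rw [hupd, Matrix.det_updateCol_smul, Matrix.updateCol_eq_self]
  have hx'li : LinearIndependent K x' := by
    set w : Fin k → Kˣ := fun j => if j = j0 then Units.mk0 c⁻¹ (inv_ne_zero hcne) else 1
      with hwdef
    have hxw' : x' = w • x := by
      funext j
      rw [Pi.smul_apply']
      by_cases hj : j = j0
      · subst hj
        simp [hx', hwdef, Units.smul_def]
      · simp [hx', hwdef, hj]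
    rw [hxw']
    exact hxli.units_smul w
  have hx'span : Submodule.span K (Set.range x') = Submodule.span K (Set.range x) := by
    apply le_antisymm
    · rw [Submodule.span_le]
      rintro _ ⟨j, rfl⟩
      by_cases hj : j = j0
      · subst hj
        rw [hx']
        simp only [if_pos rfl]
        exact Submodule.smul_mem _ _ (Submodule.subset_span ⟨j0, rfl⟩)
      · rw [hx']
        simp only [if_neg hj]
        exact Submodule.subset_span ⟨j, rfl⟩
    · rw [Submodule.span_le]
      rintro _ ⟨j, rfl⟩
      by_cases hj : j = j0
      · subst hj
        have hxj0 : x j0 = c • x' j0 := by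
          rw [hx']
          simp [smul_smul, mul_inv_cancel₀ hcne]
        rw [hxj0]
        exact Submodule.smul_mem _ _ (Submodule.subset_span ⟨j0, rfl⟩)
      · have hxj : x j = x' j := by rw [hx']; simp only [if_neg hj]
        rw [hxj]
        exact Submodule.subset_span ⟨j, rfl⟩
  set u := wedgeVec x' with hu
  set v := wedgeVec y with hv
  -- the entrywise identity
  have hentry : ∀ (S T : {s : Finset (Fin n) // s.card = k}),
      adjCompound k A S T = u S * v T := by
    rintro ⟨S, hS⟩ ⟨T, hT⟩
    have hScc : Sᶜ.card = n - k := by rw [card_compl_fin, hS]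
    have hTcc : Tᶜ.card = n - k := by rw [card_compl_fin, hT]
    have hfact : A.submatrix (Tᶜ.orderEmbOfFin hTcc) (Sᶜ.orderEmbOfFin hScc) =
        (C.submatrix (Tᶜ.orderEmbOfFin hTcc) id) * (R.submatrix id (Sᶜ.orderEmbOfFin hScc)) := by
      ext p q
      rw [Matrix.mul_apply, Matrix.submatrix_apply, hA, Matrix.mul_apply]
      rfl
    have hCdet : (Cᵀ.submatrix id (Tᶜ.orderEmbOfFin hTcc)).det =
        (C.submatrix (Tᶜ.orderEmbOfFin hTcc) id).det := by
      rw [← Matrix.det_transpose (C.submatrix (Tᶜ.orderEmbOfFin hTcc) id),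
        Matrix.transpose_submatrix]
    have hadj : adjCompound k A ⟨S, hS⟩ ⟨T, hT⟩ =
        (-1 : K) ^ ((∑ i ∈ S, (i : ℕ)) + ∑ j ∈ T, (j : ℕ)) *
          (A.submatrix (Tᶜ.orderEmbOfFin hTcc) (Sᶜ.orderEmbOfFin hScc)).det := rfl
    have huS : u ⟨S, hS⟩ = c⁻¹ * (c₁ * (-1 : K) ^ (∑ i ∈ S, (i : ℕ)) *
        (R.submatrix id (Sᶜ.orderEmbOfFin hScc)).det) := by
      rw [hx'w ⟨S, hS⟩, hxw S hS hScc]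
    have hvT : v ⟨T, hT⟩ = c₂ * (-1 : K) ^ (∑ j ∈ T, (j : ℕ)) *
        (C.submatrix (Tᶜ.orderEmbOfFin hTcc) id).det := by
      rw [hyw T hT hTcc, hCdet]
    rw [hadj, huS, hvT, hfact, Matrix.det_mul, pow_add]
    have hccc : c⁻¹ * (c₁ * c₂) = 1 := by rw [← hcdef]; exact inv_mul_cancel₀ hcne
    calc (-1 : K) ^ (∑ i ∈ S, (i : ℕ)) * (-1 : K) ^ (∑ j ∈ T, (j : ℕ)) *
          ((C.submatrix (Tᶜ.orderEmbOfFin hTcc) id).det *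
            (R.submatrix id (Sᶜ.orderEmbOfFin hScc)).det)
        = (c⁻¹ * (c₁ * c₂)) * ((-1 : K) ^ (∑ i ∈ S, (i : ℕ)) *
            (-1 : K) ^ (∑ j ∈ T, (j : ℕ)) *
            ((C.submatrix (Tᶜ.orderEmbOfFin hTcc) id).det *
              (R.submatrix id (Sᶜ.orderEmbOfFin hScc)).det)) := by
          rw [hccc, one_mul]
      _ = c⁻¹ * (c₁ * (-1 : K) ^ (∑ i ∈ S, (i : ℕ)) *
            (R.submatrix id (Sᶜ.orderEmbOfFin hScc)).det) *
          (c₂ * (-1 : K) ^ (∑ j ∈ T, (j : ℕ)) *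
            (C.submatrix (Tᶜ.orderEmbOfFin hTcc) id).det) := by ring
  -- nonvanishing of u and v
  obtain ⟨T₀, hT₀, hminR⟩ := exists_nonzero_minor R hRsurj
  obtain ⟨T₁, hT₁, hminC⟩ := exists_nonzero_minor Cᵀ hCtsurj
  have hu0 : u ≠ 0 := by
    intro h0
    have hS0 : T₀ᶜ.card = k := by rw [card_compl_fin, hT₀]; omega
    have hS0c : T₀ᶜᶜ.card = n - k := by rw [compl_compl]; exact hT₀
    have heval := congrFun h0 ⟨T₀ᶜ, hS0⟩
    rw [hx'w ⟨T₀ᶜ, hS0⟩, hxw T₀ᶜ hS0 hS0c, Pi.zero_apply] at heval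
    have hmineq : (R.submatrix id (T₀ᶜᶜ.orderEmbOfFin hS0c)).det =
        (R.submatrix id (T₀.orderEmbOfFin hT₀)).det := by
      congr 1
      ext p q
      rw [Matrix.submatrix_apply, Matrix.submatrix_apply,
        orderEmbOfFin_congr (compl_compl T₀) hS0c hT₀ q]
    rw [hmineq] at heval
    exact (mul_ne_zero (inv_ne_zero hcne) (mul_ne_zero (mul_ne_zero hc₁
      (pow_ne_zero _ (by norm_num))) hminR)) heval
  have hv0 : v ≠ 0 := by
    intro h0
    have hS1 : T₁ᶜ.card = k := by rw [card_compl_fin, hT₁]; omega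
    have hS1c : T₁ᶜᶜ.card = n - k := by rw [compl_compl]; exact hT₁
    have heval := congrFun h0 ⟨T₁ᶜ, hS1⟩
    rw [hyw T₁ᶜ hS1 hS1c, Pi.zero_apply] at heval
    have hmineq : (Cᵀ.submatrix id (T₁ᶜᶜ.orderEmbOfFin hS1c)).det =
        (Cᵀ.submatrix id (T₁.orderEmbOfFin hT₁)).det := by
      congr 1
      ext p q
      rw [Matrix.submatrix_apply, Matrix.submatrix_apply,
        orderEmbOfFin_congr (compl_compl T₁) hS1c hT₁ q]
    rw [hmineq] at heval
    exact (mul_ne_zero (mul_ne_zero hc₂ (pow_ne_zero _ (by norm_num))) hminC) heval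
  refine ⟨u, v, hu0, hv0, ?_, ⟨x', hx'li, by rw [hx'span, hxspan, hkerR], rfl⟩,
    ⟨y, hyli, by rw [hyspan, hkerC], rfl⟩⟩
  ext S T
  rw [Matrix.vecMulVec_apply, hentry S T]
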